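/- If Z(t) = e^{−(I−C)t}Z₀ with coupling matrix C = C(A) depending on A, and C(A') − C(A) = Δ, then ‖Z(T; A') − Z(T; A)‖₂ ≤ T‖Δ‖₂ · e^{T‖I−C(A)‖₂} · e^{T‖Δ‖₂} · ‖Z₀‖₂. -/

import Mathlib

open NormedSpace
open scoped Matrix.Norms.L2Operator

private lemma pow_sub_pow_norm_le {𝔸 : Type*} [NormedRing 𝔸]
    (X E : 𝔸) : ∀ k : ℕ, ‖(X + E) ^ k - X ^ k‖ ≤ k * ‖E‖ * (‖X‖ + ‖E‖) ^ (k - 1) := by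
  intro k
  induction k with
  | zero => simp
  | succ k ih =>
    have hr0 : (0:ℝ) ≤ ‖X‖ + ‖E‖ := by positivity
    have key : (X + E) ^ (k + 1) - X ^ (k + 1)
        = ((X + E) ^ k - X ^ k) * X + (X + E) ^ k * E := by
      rw [pow_succ, pow_succ]
      noncomm_ring
    rw [key]
    cases k with
    | zero =>
      simp only [pow_zero, sub_self, zero_mul, one_mul, zero_add]
      push_cast
      simp
    | succ m =>
      have ih' : ‖(X + E) ^ (m + 1) - X ^ (m + 1)‖ ≤ (m + 1) * ‖E‖ * (‖X‖ + ‖E‖) ^ m := by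
        simpa using ih
      have hpow : ‖(X + E) ^ (m + 1)‖ ≤ (‖X‖ + ‖E‖) ^ (m + 1) :=
        le_trans (norm_pow_le' _ (Nat.succ_pos m))
          (pow_le_pow_left₀ (norm_nonneg _) (norm_add_le _ _) _)
      have h1 : ‖((X + E) ^ (m + 1) - X ^ (m + 1)) * X‖ ≤
          ((m + 1) * ‖E‖ * (‖X‖ + ‖E‖) ^ m) * (‖X‖ + ‖E‖) :=
        le_trans (norm_mul_le _ _)
          (mul_le_mul ih' (le_trans (le_add_of_nonneg_right (norm_nonneg E)) le_rfl)
            (norm_nonneg _) (by positivity))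
      have h2 : ‖(X + E) ^ (m + 1) * E‖ ≤ (‖X‖ + ‖E‖) ^ (m + 1) * ‖E‖ :=
        le_trans (norm_mul_le _ _)
          (mul_le_mul_of_nonneg_right hpow (norm_nonneg _))
      calc ‖((X + E) ^ (m + 1) - X ^ (m + 1)) * X + (X + E) ^ (m + 1) * E‖
          ≤ ‖((X + E) ^ (m + 1) - X ^ (m + 1)) * X‖ + ‖(X + E) ^ (m + 1) * E‖ :=
            norm_add_le _ _
        _ ≤ ((m + 1) * ‖E‖ * (‖X‖ + ‖E‖) ^ m) * (‖X‖ + ‖E‖) + (‖X‖ + ‖E‖) ^ (m + 1) * ‖E‖ :=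
            add_le_add h1 h2
        _ ≤ (↑(m + 1 + 1) : ℝ) * ‖E‖ * (‖X‖ + ‖E‖) ^ (m + 1 + 1 - 1) :=
            le_of_eq (by simp only [Nat.add_sub_cancel]; push_cast; ring)
    done

private lemma exp_perturb_norm_le {𝔸 : Type*} [NormedRing 𝔸]
    [NormedAlgebra ℝ 𝔸] [CompleteSpace 𝔸] (X E : 𝔸) :
    ‖exp (X + E) - exp X‖ ≤ ‖E‖ * Real.exp (‖X‖ + ‖E‖) := by
  set r : ℝ := ‖X‖ + ‖E‖ with hr
  have hr0 : 0 ≤ r := by positivity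
  have hsum1 : Summable (fun k : ℕ => ((k.factorial : ℝ))⁻¹ • (X + E) ^ k) :=
    expSeries_summable' (𝕂 := ℝ) (X + E)
  have hsum2 : Summable (fun k : ℕ => ((k.factorial : ℝ))⁻¹ • X ^ k) :=
    expSeries_summable' (𝕂 := ℝ) X
  have hdiff : exp (X + E) - exp X
      = ∑' k : ℕ, (((k.factorial : ℝ))⁻¹ • (X + E) ^ k - ((k.factorial : ℝ))⁻¹ • X ^ k) := by
    rw [exp_eq_tsum ℝ]
    exact (Summable.tsum_sub hsum1 hsum2).symm
  -- the bounding series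
  set g : ℕ → ℝ := fun k => Nat.rec 0 (fun m _ => ‖E‖ * (r ^ m / m.factorial)) k with hg
  have hg0 : g 0 = 0 := rfl
  have hgs : ∀ m : ℕ, g (m + 1) = ‖E‖ * (r ^ m / m.factorial) := fun m => rfl
  have hgsum : Summable g := by
    rw [← summable_nat_add_iff 1]
    simp only [hgs]
    exact (Real.summable_pow_div_factorial r).mul_left _
  have hgtsum : ∑' k, g k = ‖E‖ * Real.exp r := by
    rw [Summable.tsum_eq_zero_add hgsum, hg0, zero_add]
    simp only [hgs]
    rw [tsum_mul_left, Real.exp_eq_exp_ℝ, exp_eq_tsum_div]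
  have hbound : ∀ k : ℕ,
      ‖((k.factorial : ℝ))⁻¹ • (X + E) ^ k - ((k.factorial : ℝ))⁻¹ • X ^ k‖ ≤ g k := by
    intro k
    rw [← smul_sub, norm_smul, norm_inv, Real.norm_natCast]
    cases k with
    | zero => simp [hg0]
    | succ m =>
      rw [hgs]
      have h := pow_sub_pow_norm_le X E (m + 1)
      simp only [Nat.add_sub_cancel] at h
      have hfac : ((m+1).factorial : ℝ) = (m + 1) * m.factorial := by
        push_cast [Nat.factorial_succ]; ring
      have h1 : (0:ℝ) < (m : ℝ) + 1 := by positivity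
      have h2 : (0:ℝ) < (m.factorial : ℝ) := by exact_mod_cast Nat.factorial_pos m
      calc (((m+1).factorial : ℝ))⁻¹ * ‖(X + E) ^ (m + 1) - X ^ (m + 1)‖
          ≤ (((m+1).factorial : ℝ))⁻¹ * ((m + 1) * ‖E‖ * r ^ m) := by
            have hnn : (0:ℝ) ≤ (((m+1).factorial : ℝ))⁻¹ := by positivity
            exact mul_le_mul_of_nonneg_left (by exact_mod_cast h) hnn
        _ = ‖E‖ * (r ^ m / m.factorial) := by
            rw [hfac]
            field_simp
  calc ‖exp (X + E) - exp X‖ ≤ ∑' k, g k := by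
        rw [hdiff]
        exact tsum_of_norm_bounded hgsum.hasSum hbound
    _ = ‖E‖ * Real.exp r := hgtsum

/-- Sensitivity of local graph diffusion `Z(T; A) = e^{−(I−C(A))T} Z₀` to topology
perturbations: with `Δ = C(A') − C(A)`,
`‖Z(T; A') − Z(T; A)‖₂ ≤ T‖Δ‖₂ e^{T‖I−C(A)‖₂} e^{T‖Δ‖₂} ‖Z₀‖₂`. -/
theorem local_diffusion_topology_sensitivity
    {n d : ℕ} (CA CA' : Matrix (Fin n) (Fin n) ℝ)
    (Δ : Matrix (Fin n) (Fin n) ℝ) (hΔ : Δ = CA' - CA)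
    (Z₀ : Matrix (Fin n) (Fin d) ℝ) (T : ℝ) (hT : 0 ≤ T) :
    ‖exp (-(T • (1 - CA'))) * Z₀ - exp (-(T • (1 - CA))) * Z₀‖ ≤
      T * ‖Δ‖ * Real.exp (T * ‖1 - CA‖) * Real.exp (T * ‖Δ‖) * ‖Z₀‖ := by
  set X : Matrix (Fin n) (Fin n) ℝ := -(T • (1 - CA)) with hX
  set E : Matrix (Fin n) (Fin n) ℝ := T • Δ with hE
  have harg : -(T • (1 - CA')) = X + E := by
    rw [hX, hE, hΔ, smul_sub, smul_sub, smul_sub]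
    abel
  have hnE : ‖E‖ = T * ‖Δ‖ := by
    rw [hE, norm_smul, Real.norm_eq_abs, abs_of_nonneg hT]
  have hnX : ‖X‖ = T * ‖1 - CA‖ := by
    rw [hX, norm_neg, norm_smul, Real.norm_eq_abs, abs_of_nonneg hT]
  have key : ‖exp (X + E) - exp X‖ ≤ ‖E‖ * Real.exp (‖X‖ + ‖E‖) :=
    exp_perturb_norm_le X E
  calc ‖exp (-(T • (1 - CA'))) * Z₀ - exp X * Z₀‖
      = ‖(exp (X + E) - exp X) * Z₀‖ := by rw [harg, Matrix.sub_mul]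
    _ ≤ ‖exp (X + E) - exp X‖ * ‖Z₀‖ := Matrix.l2_opNorm_mul _ _
    _ ≤ (‖E‖ * Real.exp (‖X‖ + ‖E‖)) * ‖Z₀‖ :=
        mul_le_mul_of_nonneg_right key (norm_nonneg _)
    _ = T * ‖Δ‖ * Real.exp (T * ‖1 - CA‖) * Real.exp (T * ‖Δ‖) * ‖Z₀‖ := by
        rw [hnE, hnX, Real.exp_add]; ring
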